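/- arXiv:0802.0030 — 2 statements merged into one kernel-verified Lean document; each statement's English description precedes it below -/
import Mathlib

section
/- Let X, W1, W2 be random variables on a probability space with values in finite nonempty sets, and let c, d be real numbers with 0 ≤ c ≤ d. Suppose H(X) = d, H(X | W1, W2) = 0, H(W1) ≤ c, and H(W2) ≤ d − c. Then H(W1) = c, H(W2) = d − c, I(W1 ; W2) = 0, H(W1, W2) = d, and H(W1, W2 | X) = 0 (so the pair (W1, W2) is a function of X). -/
open MeasureTheory ProbabilityTheory

/-- Shannon entropy (natural logarithm) of a random variable with values in a finite type,
computed from the law `μ.map X`. -/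
noncomputable def ent {Ω : Type*} [MeasurableSpace Ω] {S : Type*} [Fintype S] [MeasurableSpace S]
    (μ : Measure Ω) (X : Ω → S) : ℝ :=
  ∑ s : S, Real.negMulLog ((μ.map X) {s}).toReal

/-- Conditional entropy `H(X | Y) = H(X, Y) - H(Y)`. -/
noncomputable def condEnt {Ω S T : Type*} [MeasurableSpace Ω] [Fintype S] [MeasurableSpace S]
    [Fintype T] [MeasurableSpace T] (μ : Measure Ω) (X : Ω → S) (Y : Ω → T) : ℝ :=
  ent μ (fun ω => (X ω, Y ω)) - ent μ Y

/-- Mutual information `I(X ; Y) = H(X) + H(Y) - H(X, Y)`. -/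
noncomputable def mutInfo {Ω S T : Type*} [MeasurableSpace Ω] [Fintype S] [MeasurableSpace S]
    [Fintype T] [MeasurableSpace T] (μ : Measure Ω) (X : Ω → S) (Y : Ω → T) : ℝ :=
  ent μ X + ent μ Y - ent μ (fun ω => (X ω, Y ω))

/-- Conditional mutual information `I(X ; Y | Z) = H(X | Z) + H(Y | Z) - H(X, Y | Z)`. -/
noncomputable def condMutInfo {Ω S T U : Type*} [MeasurableSpace Ω] [Fintype S] [MeasurableSpace S]
    [Fintype T] [MeasurableSpace T] [Fintype U] [MeasurableSpace U]
    (μ : Measure Ω) (X : Ω → S) (Y : Ω → T) (Z : Ω → U) : ℝ :=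
  condEnt μ X Z + condEnt μ Y Z - condEnt μ (fun ω => (X ω, Y ω)) Z

section Aux

/-- Pointwise Gibbs-type inequality summed: cross-entropy bounds entropy. -/
lemma gibbs_aux {ι : Type*} (s : Finset ι) (p q : ι → ℝ)
    (hp : ∀ i ∈ s, 0 ≤ p i) (hq : ∀ i ∈ s, 0 ≤ q i)
    (hpq : ∀ i ∈ s, p i ≠ 0 → q i ≠ 0)
    (hsum : ∑ i ∈ s, q i ≤ ∑ i ∈ s, p i) :
    ∑ i ∈ s, Real.negMulLog (p i) ≤ ∑ i ∈ s, -(p i * Real.log (q i)) := by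
  have key : ∀ i ∈ s, Real.negMulLog (p i) ≤ -(p i * Real.log (q i)) + (q i - p i) := by
    intro i hi
    rcases eq_or_lt_of_le (hp i hi) with h0 | h0
    · simp only [← h0, Real.negMulLog_zero, zero_mul, neg_zero, zero_add, sub_zero]
      exact hq i hi
    · have hq0 : 0 < q i := (hq i hi).lt_of_ne (Ne.symm (hpq i hi (ne_of_gt h0)))
      have hlog := Real.log_le_sub_one_of_pos (show (0:ℝ) < q i / p i by positivity)
      rw [Real.log_div (ne_of_gt hq0) (ne_of_gt h0)] at hlog
      have h4 := mul_le_mul_of_nonneg_left hlog h0.le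
      have h5 : p i * (q i / p i - 1) = q i - p i := by field_simp
      rw [h5, mul_sub] at h4
      simp only [Real.negMulLog, neg_mul]
      linarith
  calc ∑ i ∈ s, Real.negMulLog (p i)
      ≤ ∑ i ∈ s, (-(p i * Real.log (q i)) + (q i - p i)) := Finset.sum_le_sum key
    _ = ∑ i ∈ s, -(p i * Real.log (q i)) + (∑ i ∈ s, q i - ∑ i ∈ s, p i) := by
        rw [Finset.sum_add_distrib, Finset.sum_sub_distrib]
    _ ≤ ∑ i ∈ s, -(p i * Real.log (q i)) := by linarith

/-- `negMulLog` is superadditive on nonnegative families. -/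
lemma negMulLog_sum_le_sum {ι : Type*} (s : Finset ι) (x : ι → ℝ)
    (hx : ∀ i ∈ s, 0 ≤ x i) :
    Real.negMulLog (∑ i ∈ s, x i) ≤ ∑ i ∈ s, Real.negMulLog (x i) := by
  have hS : ∀ i ∈ s, x i ≤ ∑ j ∈ s, x j := fun i hi => Finset.single_le_sum hx hi
  have : Real.negMulLog (∑ i ∈ s, x i)
      = ∑ i ∈ s, -(x i * Real.log (∑ j ∈ s, x j)) := by
    simp only [Real.negMulLog, neg_mul, ← Finset.sum_neg_distrib, ← neg_mul,
      Finset.sum_mul]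
  rw [this]
  refine Finset.sum_le_sum fun i hi => ?_
  rcases eq_or_lt_of_le (hx i hi) with h0 | h0
  · simp [← h0]
  · have : Real.log (x i) ≤ Real.log (∑ j ∈ s, x j) :=
      Real.log_le_log h0 (hS i hi)
    simp only [Real.negMulLog, neg_mul]
    nlinarith

lemma sum_meas_singleton {A : Type*} [Fintype A] [MeasurableSpace A]
    [MeasurableSingletonClass A] (ν : Measure A) :
    ∑ a : A, ν {a} = ν Set.univ := by
  have huniv : (Set.univ : Set A) = ⋃ a ∈ (Finset.univ : Finset A), {a} := by
    ext x; simp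
  conv_rhs => rw [huniv]
  rw [measure_biUnion_finset
    (fun a _ a' _ h => Set.disjoint_singleton.2 h)
    (fun a _ => measurableSet_singleton a)]

variable {Ω : Type*} [MeasurableSpace Ω] (μ : Measure Ω) [IsProbabilityMeasure μ]
  {A B : Type*}
  [Fintype A] [MeasurableSpace A] [MeasurableSingletonClass A]
  [Fintype B] [MeasurableSpace B] [MeasurableSingletonClass B]
  (X : Ω → A) (Y : Ω → B)

lemma joint_apply (hX : Measurable X) (hY : Measurable Y) (a : A) (b : B) :
    (μ.map (fun ω => (X ω, Y ω))) {(a, b)} = μ (X ⁻¹' {a} ∩ Y ⁻¹' {b}) := by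
  rw [Measure.map_apply (hX.prodMk hY) (measurableSet_singleton _)]
  congr 1
  ext ω
  simp [Prod.ext_iff]

lemma marginal_fst (hX : Measurable X) (hY : Measurable Y) (a : A) :
    (μ.map X) {a} = ∑ b : B, (μ.map (fun ω => (X ω, Y ω))) {(a, b)} := by
  simp_rw [joint_apply μ X Y hX hY, Measure.map_apply hX (measurableSet_singleton _)]
  have hunion : X ⁻¹' {a} = ⋃ b ∈ (Finset.univ : Finset B), X ⁻¹' {a} ∩ Y ⁻¹' {b} := by
    ext ω; simp
  conv_lhs => rw [hunion]
  rw [measure_biUnion_finset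
    (fun b _ b' _ h => Disjoint.mono Set.inter_subset_right Set.inter_subset_right
      ((Set.disjoint_singleton.2 h).preimage Y))
    (fun b _ => (hX (measurableSet_singleton a)).inter (hY (measurableSet_singleton b)))]

lemma marginal_snd (hX : Measurable X) (hY : Measurable Y) (b : B) :
    (μ.map Y) {b} = ∑ a : A, (μ.map (fun ω => (X ω, Y ω))) {(a, b)} := by
  simp_rw [joint_apply μ X Y hX hY, Measure.map_apply hY (measurableSet_singleton _)]
  have hunion : Y ⁻¹' {b} = ⋃ a ∈ (Finset.univ : Finset A), X ⁻¹' {a} ∩ Y ⁻¹' {b} := by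
    ext ω; simp
  conv_lhs => rw [hunion]
  rw [measure_biUnion_finset
    (fun a _ a' _ h => Disjoint.mono Set.inter_subset_left Set.inter_subset_left
      ((Set.disjoint_singleton.2 h).preimage X))
    (fun a _ => (hX (measurableSet_singleton a)).inter (hY (measurableSet_singleton b)))]

lemma marginal_fst_real (hX : Measurable X) (hY : Measurable Y) (a : A) :
    ((μ.map X) {a}).toReal
      = ∑ b : B, ((μ.map (fun ω => (X ω, Y ω))) {(a, b)}).toReal := by
  rw [marginal_fst μ X Y hX hY a, ENNReal.toReal_sum]
  exact fun b _ => measure_ne_top _ _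

lemma marginal_snd_real (hX : Measurable X) (hY : Measurable Y) (b : B) :
    ((μ.map Y) {b}).toReal
      = ∑ a : A, ((μ.map (fun ω => (X ω, Y ω))) {(a, b)}).toReal := by
  rw [marginal_snd μ X Y hX hY b, ENNReal.toReal_sum]
  exact fun a _ => measure_ne_top _ _

/-- Total mass one for the joint distribution. -/
lemma joint_sum_one (hX : Measurable X) (hY : Measurable Y) :
    ∑ c : A × B, ((μ.map (fun ω => (X ω, Y ω))) {c}).toReal = 1 := by
  have : IsProbabilityMeasure (μ.map (fun ω => (X ω, Y ω))) :=
    Measure.isProbabilityMeasure_map (hX.prodMk hY).aemeasurable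
  rw [← ENNReal.toReal_sum (fun c _ => measure_ne_top _ _), sum_meas_singleton]
  simp

/-- Monotonicity: `H(X) ≤ H(X, Y)`. -/
lemma ent_le_ent_pair (hX : Measurable X) (hY : Measurable Y) :
    ent μ X ≤ ent μ (fun ω => (X ω, Y ω)) := by
  unfold ent
  rw [Fintype.sum_prod_type]
  refine Finset.sum_le_sum fun a _ => ?_
  rw [marginal_fst_real μ X Y hX hY a]
  exact negMulLog_sum_le_sum _ _ fun b _ => ENNReal.toReal_nonneg

/-- Symmetry: `H(X, Y) = H(Y, X)`. -/
lemma ent_pair_comm (hX : Measurable X) (hY : Measurable Y) :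
    ent μ (fun ω => (X ω, Y ω)) = ent μ (fun ω => (Y ω, X ω)) := by
  unfold ent
  rw [Fintype.sum_prod_type]
  rw [show (∑ c : B × A, Real.negMulLog ((μ.map fun ω => (Y ω, X ω)) {c}).toReal)
      = ∑ b : B, ∑ a : A, Real.negMulLog ((μ.map fun ω => (Y ω, X ω)) {(b, a)}).toReal
    from Fintype.sum_prod_type _]
  rw [Finset.sum_comm]
  refine Finset.sum_congr rfl fun b _ => Finset.sum_congr rfl fun a _ => ?_
  rw [joint_apply μ X Y hX hY, joint_apply μ Y X hY hX, Set.inter_comm]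

/-- Subadditivity: `H(X, Y) ≤ H(X) + H(Y)`. -/
lemma ent_pair_le_add (hX : Measurable X) (hY : Measurable Y) :
    ent μ (fun ω => (X ω, Y ω)) ≤ ent μ X + ent μ Y := by
  set p : A × B → ℝ := fun c => ((μ.map (fun ω => (X ω, Y ω))) {c}).toReal with hp
  set q : A × B → ℝ := fun c => ((μ.map X) {c.1}).toReal * ((μ.map Y) {c.2}).toReal with hq
  have hp0 : ∀ c, 0 ≤ p c := fun c => ENNReal.toReal_nonneg
  have hqm : ∀ c : A × B, p c ≤ ((μ.map X) {c.1}).toReal := by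
    intro c
    rw [marginal_fst_real μ X Y hX hY c.1]
    exact Finset.single_le_sum (fun b _ => hp0 (c.1, b)) (Finset.mem_univ c.2)
  have hqm' : ∀ c : A × B, p c ≤ ((μ.map Y) {c.2}).toReal := by
    intro c
    rw [marginal_snd_real μ X Y hX hY c.2]
    exact Finset.single_le_sum (fun a _ => hp0 (a, c.2)) (Finset.mem_univ c.1)
  have hmain : ent μ (fun ω => (X ω, Y ω)) ≤ ∑ c : A × B, -(p c * Real.log (q c)) := by
    apply gibbs_aux
    · exact fun c _ => hp0 c
    · exact fun c _ => mul_nonneg ENNReal.toReal_nonneg ENNReal.toReal_nonneg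
    · intro c _ hc
      have h1 : 0 < ((μ.map X) {c.1}).toReal := lt_of_lt_of_le ((hp0 c).lt_of_ne (Ne.symm hc)) (hqm c)
      have h2 : 0 < ((μ.map Y) {c.2}).toReal := lt_of_lt_of_le ((hp0 c).lt_of_ne (Ne.symm hc)) (hqm' c)
      positivity
    · have hqsum : ∑ c : A × B, q c = 1 := by
        rw [Fintype.sum_prod_type]
        simp only [hq]
        rw [← Finset.sum_mul_sum]
        have hXprob : IsProbabilityMeasure (μ.map X) := Measure.isProbabilityMeasure_map hX.aemeasurable
        have hYprob : IsProbabilityMeasure (μ.map Y) := Measure.isProbabilityMeasure_map hY.aemeasurable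
        have hXs : ∑ a : A, ((μ.map X) {a}).toReal = 1 := by
          rw [← ENNReal.toReal_sum (fun a _ => measure_ne_top _ _), sum_meas_singleton]
          simp
        have hYs : ∑ b : B, ((μ.map Y) {b}).toReal = 1 := by
          rw [← ENNReal.toReal_sum (fun b _ => measure_ne_top _ _), sum_meas_singleton]
          simp
        rw [hXs, hYs, one_mul]
      rw [hqsum, joint_sum_one μ X Y hX hY]
  refine hmain.trans (le_of_eq ?_)
  have hsplit : ∀ c : A × B, -(p c * Real.log (q c))
      = -(p c * Real.log (((μ.map X) {c.1}).toReal))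
        + -(p c * Real.log (((μ.map Y) {c.2}).toReal)) := by
    intro c
    rcases eq_or_ne (p c) 0 with h | h
    · simp [h]
    · have h1 : ((μ.map X) {c.1}).toReal ≠ 0 :=
        ne_of_gt (lt_of_lt_of_le ((hp0 c).lt_of_ne (Ne.symm h)) (hqm c))
      have h2 : ((μ.map Y) {c.2}).toReal ≠ 0 :=
        ne_of_gt (lt_of_lt_of_le ((hp0 c).lt_of_ne (Ne.symm h)) (hqm' c))
      rw [hq]
      simp only []
      rw [Real.log_mul h1 h2]
      ring
  rw [Finset.sum_congr rfl fun c _ => hsplit c, Finset.sum_add_distrib]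
  congr 1
  · unfold ent
    rw [Fintype.sum_prod_type]
    refine Finset.sum_congr rfl fun a _ => ?_
    have hstep : ∑ b : B, -(p (a, b) * Real.log (((μ.map X) {a}).toReal))
        = -((∑ b : B, p (a, b)) * Real.log (((μ.map X) {a}).toReal)) := by
      simp only [← neg_mul]
      rw [← Finset.sum_mul, Finset.sum_neg_distrib, neg_mul]
    rw [hstep, ← marginal_fst_real μ X Y hX hY a, Real.negMulLog, neg_mul]
  · unfold ent
    rw [show (∑ c : A × B, -(p c * Real.log (((μ.map Y) {c.2}).toReal)))
        = ∑ b : B, ∑ a : A, -(p (a, b) * Real.log (((μ.map Y) {b}).toReal)) by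
      rw [Fintype.sum_prod_type, Finset.sum_comm]]
    refine Finset.sum_congr rfl fun b _ => ?_
    have hstep : ∑ a : A, -(p (a, b) * Real.log (((μ.map Y) {b}).toReal))
        = -((∑ a : A, p (a, b)) * Real.log (((μ.map Y) {b}).toReal)) := by
      simp only [← neg_mul]
      rw [← Finset.sum_mul, Finset.sum_neg_distrib, neg_mul]
    rw [hstep, ← marginal_snd_real μ X Y hX hY b, Real.negMulLog, neg_mul]

end Aux

theorem stmt_4
    {Ω : Type*} [MeasurableSpace Ω] (μ : Measure Ω) [IsProbabilityMeasure μ]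
    {SX S1 S2 : Type*}
    [Fintype SX] [Nonempty SX] [MeasurableSpace SX] [MeasurableSingletonClass SX]
    [Fintype S1] [Nonempty S1] [MeasurableSpace S1] [MeasurableSingletonClass S1]
    [Fintype S2] [Nonempty S2] [MeasurableSpace S2] [MeasurableSingletonClass S2]
    (X : Ω → SX) (W₁ : Ω → S1) (W₂ : Ω → S2)
    (hX : Measurable X) (hW₁ : Measurable W₁) (hW₂ : Measurable W₂)
    (c d : ℝ) (hc : 0 ≤ c) (hcd : c ≤ d)
    (hXd : ent μ X = d)
    (hdec : condEnt μ X (fun ω => (W₁ ω, W₂ ω)) = 0)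
    (h1 : ent μ W₁ ≤ c) (h2 : ent μ W₂ ≤ d - c) :
    ent μ W₁ = c ∧ ent μ W₂ = d - c ∧ mutInfo μ W₁ W₂ = 0 ∧
      ent μ (fun ω => (W₁ ω, W₂ ω)) = d ∧
      condEnt μ (fun ω => (W₁ ω, W₂ ω)) X = 0 := by
  set W : Ω → S1 × S2 := fun ω => (W₁ ω, W₂ ω) with hW
  have hWm : Measurable W := hW₁.prodMk hW₂
  have hj : ent μ (fun ω => (X ω, W ω)) = ent μ W := by
    have := hdec
    unfold condEnt at this
    linarith
  have hdj : d ≤ ent μ (fun ω => (X ω, W ω)) := by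
    rw [← hXd]; exact ent_le_ent_pair μ X W hX hWm
  have hsub : ent μ W ≤ ent μ W₁ + ent μ W₂ := ent_pair_le_add μ W₁ W₂ hW₁ hW₂
  have hle : ent μ W ≤ d := by linarith
  have heW : ent μ W = d := le_antisymm hle (hj ▸ hdj)
  have ha : ent μ W₁ = c := by linarith
  have hb : ent μ W₂ = d - c := by linarith
  refine ⟨ha, hb, ?_, heW, ?_⟩
  · unfold mutInfo; rw [ha, hb, heW]; ring
  · unfold condEnt
    rw [← ent_pair_comm μ X W hX hWm, hj, heW, hXd]
    ring
end

section
/- Let K, W1, W3, W4 be random variables on a probability space with values in finite nonempty sets and let c be a real number. Suppose H(K | W1, W3) = 0, H(W4 | W1, W3) = 0, W1 is independent of the pair (K, W4) (i.e., I(W1 ; K, W4) = 0), H(W1) = H(K) = H(W4) = c, and H(W3) ≤ c. Then H(K, W4) = c, H(K | W4) = 0, and H(W4 | K) = 0 (the key K is a function of W4 and vice versa). -/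
open MeasureTheory ProbabilityTheory

open MeasureTheory ProbabilityTheory Real Finset
open scoped Classical

section RealLemmas

variable {ι : Type*}

lemma myNegMulLog_eq_sum (s : Finset ι) (g : ι → ℝ) (hg : ∀ i ∈ s, 0 ≤ g i) :
    Real.negMulLog (∑ i ∈ s, g i) = ∑ i ∈ s, (g i * (-Real.log (∑ i ∈ s, g i))) := by
  rw [← Finset.sum_mul, Real.negMulLog]
  ring

lemma myNegMulLog_sum_le (s : Finset ι) (g : ι → ℝ) (hg : ∀ i ∈ s, 0 ≤ g i) :
    Real.negMulLog (∑ i ∈ s, g i) ≤ ∑ i ∈ s, Real.negMulLog (g i) := by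
  rw [myNegMulLog_eq_sum s g hg]
  refine Finset.sum_le_sum fun i hi => ?_
  rcases (hg i hi).eq_or_lt with h | h
  · simp [← h]
  · have hle : g i ≤ ∑ j ∈ s, g j := Finset.single_le_sum hg hi
    have : Real.log (g i) ≤ Real.log (∑ j ∈ s, g j) := Real.log_le_log h hle
    rw [Real.negMulLog]
    nlinarith

lemma myEqCase (s : Finset ι) (g : ι → ℝ) (hg : ∀ i ∈ s, 0 ≤ g i)
    (heq : ∑ i ∈ s, Real.negMulLog (g i) = Real.negMulLog (∑ i ∈ s, g i)) :
    ∀ i ∈ s, g i = 0 ∨ g i = ∑ j ∈ s, g j := by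
  rw [myNegMulLog_eq_sum s g hg] at heq
  have hsum : ∑ i ∈ s, (g i * (Real.log (∑ j ∈ s, g j) - Real.log (g i))) = 0 := by
    have h2 : ∑ i ∈ s, Real.negMulLog (g i) = ∑ i ∈ s, (g i * (-Real.log (g i))) := by
      refine Finset.sum_congr rfl fun i _ => ?_
      rw [Real.negMulLog]; ring
    calc ∑ i ∈ s, (g i * (Real.log (∑ j ∈ s, g j) - Real.log (g i)))
        = ∑ i ∈ s, ((g i * (-Real.log (g i))) - (g i * (-Real.log (∑ j ∈ s, g j)))) := by
          refine Finset.sum_congr rfl fun i _ => ?_; ring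
      _ = (∑ i ∈ s, Real.negMulLog (g i)) - ∑ i ∈ s, (g i * (-Real.log (∑ j ∈ s, g j))) := by
          rw [Finset.sum_sub_distrib, ← h2]
      _ = 0 := by rw [heq]; ring
  have hterm : ∀ i ∈ s, g i * (Real.log (∑ j ∈ s, g j) - Real.log (g i)) = 0 := by
    rw [Finset.sum_eq_zero_iff_of_nonneg] at hsum
    · exact hsum
    · intro i hi
      rcases (hg i hi).eq_or_lt with h | h
      · simp [← h]
      · have hle : g i ≤ ∑ j ∈ s, g j := Finset.single_le_sum hg hi
        have := Real.log_le_log h hle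
        nlinarith
  intro i hi
  rcases (hg i hi).eq_or_lt with h | h
  · exact Or.inl h.symm
  · right
    have := hterm i hi
    rcases mul_eq_zero.1 this with h0 | h0
    · exact absurd h0 h.ne'
    · have hloge : Real.log (g i) = Real.log (∑ j ∈ s, g j) := by linarith [sub_eq_zero.mp h0]
      have hle : g i ≤ ∑ j ∈ s, g j := Finset.single_le_sum hg hi
      have hpos : 0 < ∑ j ∈ s, g j := lt_of_lt_of_le h hle
      exact Real.log_injOn_pos (Set.mem_Ioi.2 h) (Set.mem_Ioi.2 hpos) hloge

lemma myKey {r a b : ℝ} (hr : 0 ≤ r) (hb : 0 ≤ b) (hra : r ≤ a) (hrb : r ≤ b) :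
    Real.negMulLog r ≤ (a * b - r) + r * (-Real.log a - Real.log b) := by
  rcases hr.eq_or_lt with h | h
  · simp only [← h, Real.negMulLog_zero, zero_mul, add_zero, sub_zero]
    nlinarith
  · have ha : 0 < a := lt_of_lt_of_le h hra
    have hb' : 0 < b := lt_of_lt_of_le h hrb
    have hab : 0 < a * b := mul_pos ha hb'
    have hdiv : 0 < a * b / r := div_pos hab h
    have hlog := Real.log_le_sub_one_of_pos hdiv
    have hlogeq : Real.log (a * b / r) = Real.log a + Real.log b - Real.log r := by
      rw [Real.log_div (mul_pos ha hb').ne' h.ne', Real.log_mul ha.ne' hb'.ne']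
    rw [hlogeq] at hlog
    have := mul_le_mul_of_nonneg_left hlog hr
    have hfield : r * (a * b / r - 1) = a * b - r := by field_simp
    rw [hfield] at this
    rw [Real.negMulLog]
    nlinarith

end RealLemmas

section MeasureLemmas

variable {Ω : Type*} [MeasurableSpace Ω] (μ : Measure Ω) [IsProbabilityMeasure μ]
variable {S T : Type*} [Fintype S] [MeasurableSpace S] [MeasurableSingletonClass S]
variable [Fintype T] [MeasurableSpace T] [MeasurableSingletonClass T]

lemma myMapSing {X : Ω → S} (hX : Measurable X) (s : S) :
    (μ.map X) {s} = μ (X ⁻¹' {s}) :=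
  Measure.map_apply hX (MeasurableSet.singleton s)

lemma mySumOne {X : Ω → S} (hX : Measurable X) :
    ∑ s : S, ((μ.map X) {s}).toReal = 1 := by
  have h1 : ∑ s ∈ Finset.univ, μ (X ⁻¹' {s}) = μ (X ⁻¹' ↑(Finset.univ : Finset S)) :=
    sum_measure_preimage_singleton _ fun y _ => hX (MeasurableSet.singleton y)
  rw [Finset.coe_univ, Set.preimage_univ, measure_univ] at h1
  have h2 : ∑ s : S, ((μ.map X) {s}).toReal = (∑ s ∈ Finset.univ, μ (X ⁻¹' {s})).toReal := by
    rw [ENNReal.toReal_sum fun _ _ => measure_ne_top _ _]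
    exact Finset.sum_congr rfl fun s _ => by rw [myMapSing μ hX]
  rw [h2, h1, ENNReal.toReal_one]

lemma myMapComp {X : Ω → S} (hX : Measurable X) (f : S → T) (t : T) :
    ((μ.map fun ω => f (X ω)) {t}).toReal
      = ∑ s ∈ Finset.univ.filter (fun s => f s = t), ((μ.map X) {s}).toReal := by
  have hf : Measurable f := measurable_of_countable f
  rw [myMapSing μ (X := fun ω => f (X ω)) (hf.comp hX)]
  have hset : (fun ω => f (X ω)) ⁻¹' {t}
      = X ⁻¹' ↑(Finset.univ.filter fun s => f s = t) := by
    ext ω; simp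
  rw [hset, ← sum_measure_preimage_singleton _ (fun y _ => hX (MeasurableSet.singleton y)),
    ENNReal.toReal_sum fun _ _ => measure_ne_top _ _]
  exact Finset.sum_congr rfl fun s _ => by rw [myMapSing μ hX]

lemma myEntCompLe {X : Ω → S} (hX : Measurable X) (f : S → T) :
    ent μ (fun ω => f (X ω)) ≤ ent μ X := by
  unfold ent
  calc ∑ t : T, Real.negMulLog ((μ.map fun ω => f (X ω)) {t}).toReal
      = ∑ t : T, Real.negMulLog
          (∑ s ∈ Finset.univ.filter (fun s => f s = t), ((μ.map X) {s}).toReal) := by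
        exact Finset.sum_congr rfl fun t _ => by rw [myMapComp μ hX f t]
    _ ≤ ∑ t : T, ∑ s ∈ Finset.univ.filter (fun s => f s = t),
          Real.negMulLog ((μ.map X) {s}).toReal :=
        Finset.sum_le_sum fun t _ =>
          myNegMulLog_sum_le _ _ fun _ _ => ENNReal.toReal_nonneg
    _ = ∑ s : S, Real.negMulLog ((μ.map X) {s}).toReal :=
        Finset.sum_fiberwise _ f _

lemma myEntCongr {X Z : Ω → S} (h : X =ᵐ[μ] Z) : ent μ X = ent μ Z := by
  unfold ent
  rw [Measure.map_congr h]

end MeasureLemmas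

section PairLemmas

variable {Ω : Type*} [MeasurableSpace Ω] (μ : Measure Ω) [IsProbabilityMeasure μ]
variable {S T : Type*} [Fintype S] [MeasurableSpace S] [MeasurableSingletonClass S]
variable [Fintype T] [MeasurableSpace T] [MeasurableSingletonClass T]

lemma mySumFilterFst (g : S × T → ℝ) (s : S) :
    ∑ p ∈ Finset.univ.filter (fun p : S × T => p.1 = s), g p = ∑ t : T, g (s, t) := by
  rw [Finset.sum_filter, Fintype.sum_prod_type, Finset.sum_comm]
  simp

lemma mySumFilterSnd (g : S × T → ℝ) (t : T) :
    ∑ p ∈ Finset.univ.filter (fun p : S × T => p.2 = t), g p = ∑ s : S, g (s, t) := by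
  rw [Finset.sum_filter, Fintype.sum_prod_type]
  simp

lemma myMargFst {X : Ω → S} {Y : Ω → T} (hX : Measurable X) (hY : Measurable Y) (s : S) :
    ((μ.map X) {s}).toReal = ∑ t : T, ((μ.map fun ω => (X ω, Y ω)) {(s, t)}).toReal := by
  have := myMapComp μ (hX.prodMk hY) Prod.fst s
  simpa [mySumFilterFst] using this

lemma myMargSnd {X : Ω → S} {Y : Ω → T} (hX : Measurable X) (hY : Measurable Y) (t : T) :
    ((μ.map Y) {t}).toReal = ∑ s : S, ((μ.map fun ω => (X ω, Y ω)) {(s, t)}).toReal := by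
  have := myMapComp μ (hX.prodMk hY) Prod.snd t
  simpa [mySumFilterSnd] using this

lemma myEntPair (X : Ω → S) (Y : Ω → T) :
    ent μ (fun ω => (X ω, Y ω))
      = ∑ s : S, ∑ t : T, Real.negMulLog ((μ.map fun ω => (X ω, Y ω)) {(s, t)}).toReal := by
  unfold ent
  rw [Fintype.sum_prod_type]

lemma myEntPairLe {X : Ω → S} {Y : Ω → T} (hX : Measurable X) (hY : Measurable Y) :
    ent μ (fun ω => (X ω, Y ω)) ≤ ent μ X + ent μ Y := by
  set r : S → T → ℝ := fun s t => ((μ.map fun ω => (X ω, Y ω)) {(s, t)}).toReal with hr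
  have hr0 : ∀ s t, 0 ≤ r s t := fun _ _ => ENNReal.toReal_nonneg
  set ps : S → ℝ := fun s => ∑ t, r s t with hps
  set qt : T → ℝ := fun t => ∑ s, r s t with hqt
  have hpsX : ∀ s, ((μ.map X) {s}).toReal = ps s := fun s => myMargFst μ hX hY s
  have hqtY : ∀ t, ((μ.map Y) {t}).toReal = qt t := fun t => myMargSnd μ hX hY t
  have htot : ∑ s, ps s = 1 := by
    rw [← mySumOne μ hX]; exact Finset.sum_congr rfl fun s _ => (hpsX s).symm
  have htotq : ∑ t, qt t = 1 := by
    rw [← mySumOne μ hY]; exact Finset.sum_congr rfl fun t _ => (hqtY t).symm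
  have hps0 : ∀ s, 0 ≤ ps s := fun s => Finset.sum_nonneg fun t _ => hr0 s t
  have hqt0 : ∀ t, 0 ≤ qt t := fun t => Finset.sum_nonneg fun s _ => hr0 s t
  have hkey : ∀ s t, Real.negMulLog (r s t)
      ≤ (ps s * qt t - r s t) + r s t * (-Real.log (ps s) - Real.log (qt t)) := by
    intro s t
    exact myKey (hr0 s t) (hqt0 t)
      (Finset.single_le_sum (fun t' _ => hr0 s t') (Finset.mem_univ t))
      (Finset.single_le_sum (fun s' _ => hr0 s' t) (Finset.mem_univ s))
  have hbound : ∑ s, ∑ t, Real.negMulLog (r s t)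
      ≤ ∑ s, ∑ t, ((ps s * qt t - r s t) + r s t * (-Real.log (ps s) - Real.log (qt t))) :=
    Finset.sum_le_sum fun s _ => Finset.sum_le_sum fun t _ => hkey s t
  have hsplit : ∑ s, ∑ t, ((ps s * qt t - r s t) + r s t * (-Real.log (ps s) - Real.log (qt t)))
      = ((∑ s, ps s) * (∑ t, qt t) - ∑ s, ∑ t, r s t)
        + ((∑ s, ∑ t, r s t * (-Real.log (ps s))) + ∑ s, ∑ t, r s t * (-Real.log (qt t))) := by
    rw [Finset.sum_mul_sum]
    simp only [← Finset.sum_add_distrib, ← Finset.sum_sub_distrib]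
    refine Finset.sum_congr rfl fun s _ => Finset.sum_congr rfl fun t _ => ?_
    ring
  have hrtot : ∑ s, ∑ t, r s t = 1 := htot
  have hA : ∑ s, ∑ t, r s t * (-Real.log (ps s)) = ∑ s, Real.negMulLog (ps s) := by
    refine Finset.sum_congr rfl fun s _ => ?_
    rw [← Finset.sum_mul, Real.negMulLog]
    ring
  have hB : ∑ s, ∑ t, r s t * (-Real.log (qt t)) = ∑ t, Real.negMulLog (qt t) := by
    rw [Finset.sum_comm]
    refine Finset.sum_congr rfl fun t _ => ?_
    rw [← Finset.sum_mul, Real.negMulLog]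
    ring
  have hentX : ent μ X = ∑ s, Real.negMulLog (ps s) := by
    unfold ent; exact Finset.sum_congr rfl fun s _ => by rw [hpsX s]
  have hentY : ent μ Y = ∑ t, Real.negMulLog (qt t) := by
    unfold ent; exact Finset.sum_congr rfl fun t _ => by rw [hqtY t]
  rw [myEntPair, hentX, hentY]
  calc ∑ s, ∑ t, Real.negMulLog (r s t)
      ≤ ((∑ s, ps s) * (∑ t, qt t) - ∑ s, ∑ t, r s t)
        + ((∑ s, ∑ t, r s t * (-Real.log (ps s))) + ∑ s, ∑ t, r s t * (-Real.log (qt t))) := by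
        rw [← hsplit]; exact hbound
    _ = (∑ s, Real.negMulLog (ps s)) + ∑ t, Real.negMulLog (qt t) := by
        rw [htot, htotq, hA, hB]; ring

end PairLemmas

section Determinism

variable {Ω : Type*} [MeasurableSpace Ω] (μ : Measure Ω) [IsProbabilityMeasure μ]
variable {S T : Type*} [Fintype S] [Nonempty S] [MeasurableSpace S] [MeasurableSingletonClass S]
variable [Fintype T] [MeasurableSpace T] [MeasurableSingletonClass T]

lemma myDeterm {X : Ω → S} {Y : Ω → T} (hX : Measurable X) (hY : Measurable Y)
    (h : condEnt μ X Y = 0) : ∃ f : T → S, ∀ᵐ ω ∂μ, X ω = f (Y ω) := by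
  set r : S → T → ℝ := fun s t => ((μ.map fun ω => (X ω, Y ω)) {(s, t)}).toReal with hr
  have hr0 : ∀ s t, 0 ≤ r s t := fun _ _ => ENNReal.toReal_nonneg
  have hq : ∀ t, ((μ.map Y) {t}).toReal = ∑ s, r s t := fun t => myMargSnd μ hX hY t
  -- equality of sums
  have hent : ∑ t : T, ∑ s : S, Real.negMulLog (r s t) = ∑ t : T, Real.negMulLog (∑ s, r s t) := by
    have h1 : ent μ (fun ω => (X ω, Y ω)) = ent μ Y := by
      have := h; unfold condEnt at this; linarith
    have h2 : ent μ (fun ω => (X ω, Y ω)) = ∑ t : T, ∑ s : S, Real.negMulLog (r s t) := by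
      rw [myEntPair, Finset.sum_comm]
    have h3 : ent μ Y = ∑ t : T, Real.negMulLog (∑ s, r s t) := by
      unfold ent; exact Finset.sum_congr rfl fun t _ => by rw [hq t]
    rw [← h2, ← h3, h1]
  -- pointwise equality
  have hpt : ∀ t : T, ∑ s : S, Real.negMulLog (r s t) = Real.negMulLog (∑ s, r s t) := by
    have hle : ∀ t ∈ Finset.univ, Real.negMulLog (∑ s, r s t) ≤ ∑ s : S, Real.negMulLog (r s t) :=
      fun t _ => myNegMulLog_sum_le _ _ fun s _ => hr0 s t
    have := (Finset.sum_eq_sum_iff_of_le hle).1 hent.symm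
    intro t
    exact (this t (Finset.mem_univ t)).symm
  have hdich : ∀ t s, r s t = 0 ∨ r s t = ∑ s', r s' t := by
    intro t
    have := myEqCase Finset.univ (fun s => r s t) (fun s _ => hr0 s t) (hpt t)
    exact fun s => this s (Finset.mem_univ s)
  -- choice of f
  set f : T → S := fun t =>
    if h : ∃ s, (∑ s', r s' t) ≤ r s t then h.choose else Classical.arbitrary S with hf
  -- all off-graph cells are null
  have hnull : ∀ t s, s ≠ f t → r s t = 0 := by
    intro t s hst
    by_cases hex : ∃ s, (∑ s', r s' t) ≤ r s t
    · have hft : (∑ s', r s' t) ≤ r (f t) t := by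
        rw [hf]; simp only [hex, dif_pos]; exact hex.choose_spec
      have hpair : r s t + r (f t) t ≤ ∑ s', r s' t := by
        have hsub : ({s, f t} : Finset S) ⊆ Finset.univ := Finset.subset_univ _
        have := Finset.sum_le_sum_of_subset_of_nonneg hsub
          (fun i _ _ => hr0 i t)
        rwa [Finset.sum_pair hst] at this
      have := hr0 (f t) t
      have := hr0 s t
      linarith
    · rcases hdich t s with h0 | h0
      · exact h0
      · exact absurd ⟨s, h0.ge⟩ hex
  -- translate to measure zero
  have hcell : ∀ t s, s ≠ f t → μ ((fun ω => (X ω, Y ω)) ⁻¹' {(s, t)}) = 0 := by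
    intro t s hst
    have h0 : ((μ.map fun ω => (X ω, Y ω)) {(s, t)}).toReal = 0 := hnull t s hst
    have hne : (μ.map fun ω => (X ω, Y ω)) {(s, t)} ≠ ⊤ := by
      have : IsProbabilityMeasure (μ.map fun ω => (X ω, Y ω)) :=
        Measure.isProbabilityMeasure_map (hX.prodMk hY).aemeasurable
      exact measure_ne_top _ _
    have := (ENNReal.toReal_eq_zero_iff _).1 h0
    rcases this with h' | h'
    · rwa [myMapSing μ (hX.prodMk hY)] at h'
    · exact absurd h' hne
  refine ⟨f, ?_⟩
  rw [MeasureTheory.ae_iff]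
  have hsubset : {ω | ¬ X ω = f (Y ω)} ⊆
      ⋃ p : S × T, (if p.1 = f p.2 then (∅ : Set Ω)
        else (fun ω => (X ω, Y ω)) ⁻¹' {p}) := by
    intro ω hω
    refine Set.mem_iUnion.2 ⟨(X ω, Y ω), ?_⟩
    rw [if_neg hω]
    exact rfl
  refine measure_mono_null hsubset (measure_iUnion_null fun p => ?_)
  by_cases hp : p.1 = f p.2
  · rw [if_pos hp]; exact measure_empty
  · rw [if_neg hp]
    exact hcell p.2 p.1 hp

end Determinism


theorem stmt_10
    {Ω : Type*} [MeasurableSpace Ω] (μ : Measure Ω) [IsProbabilityMeasure μ]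
    {SK S1 S3 S4 : Type*}
    [Fintype SK] [Nonempty SK] [MeasurableSpace SK] [MeasurableSingletonClass SK]
    [Fintype S1] [Nonempty S1] [MeasurableSpace S1] [MeasurableSingletonClass S1]
    [Fintype S3] [Nonempty S3] [MeasurableSpace S3] [MeasurableSingletonClass S3]
    [Fintype S4] [Nonempty S4] [MeasurableSpace S4] [MeasurableSingletonClass S4]
    (K : Ω → SK) (W₁ : Ω → S1) (W₃ : Ω → S3) (W₄ : Ω → S4)
    (hK : Measurable K) (hW₁ : Measurable W₁) (hW₃ : Measurable W₃) (hW₄ : Measurable W₄)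
    (c : ℝ)
    (hKfun : condEnt μ K (fun ω => (W₁ ω, W₃ ω)) = 0)
    (hW₄fun : condEnt μ W₄ (fun ω => (W₁ ω, W₃ ω)) = 0)
    (hind : mutInfo μ W₁ (fun ω => (K ω, W₄ ω)) = 0)
    (h1 : ent μ W₁ = c) (h2 : ent μ K = c) (h3 : ent μ W₄ = c)
    (h4 : ent μ W₃ ≤ c) :
    ent μ (fun ω => (K ω, W₄ ω)) = c ∧
      condEnt μ K W₄ = 0 ∧ condEnt μ W₄ K = 0 := by
  classical
  have hKW : Measurable (fun ω => (K ω, W₄ ω)) := hK.prodMk hW₄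
  have h13 : Measurable (fun ω => (W₁ ω, W₃ ω)) := hW₁.prodMk hW₃
  obtain ⟨f, hfae⟩ := myDeterm μ hK h13 hKfun
  obtain ⟨g, hgae⟩ := myDeterm μ hW₄ h13 hW₄fun
  set F : S1 × S3 → S1 × (SK × S4) := fun z => (z.1, (f z, g z)) with hF
  have hae : (fun ω => (W₁ ω, (K ω, W₄ ω))) =ᵐ[μ] (fun ω => F (W₁ ω, W₃ ω)) := by
    filter_upwards [hfae, hgae] with ω hk hw
    simp [hF, hk, hw]
  have hup : ent μ (fun ω => (W₁ ω, (K ω, W₄ ω))) ≤ c + c := by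
    calc ent μ (fun ω => (W₁ ω, (K ω, W₄ ω)))
        = ent μ (fun ω => F (W₁ ω, W₃ ω)) := myEntCongr μ hae
      _ ≤ ent μ (fun ω => (W₁ ω, W₃ ω)) := myEntCompLe μ h13 F
      _ ≤ ent μ W₁ + ent μ W₃ := myEntPairLe μ hW₁ hW₃
      _ ≤ c + c := by rw [h1]; linarith
  simp only [mutInfo] at hind
  have hle : ent μ (fun ω => (K ω, W₄ ω)) ≤ c := by
    rw [h1] at hind
    linarith
  have hge : c ≤ ent μ (fun ω => (K ω, W₄ ω)) := by
    have hfst : ent μ K ≤ ent μ (fun ω => (K ω, W₄ ω)) := myEntCompLe μ hKW Prod.fst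
    linarith [h2 ▸ hfst]
  have hent : ent μ (fun ω => (K ω, W₄ ω)) = c := le_antisymm hle hge
  have hW4K : Measurable (fun ω => (W₄ ω, K ω)) := hW₄.prodMk hK
  have hsw1 : ent μ (fun ω => (W₄ ω, K ω)) ≤ ent μ (fun ω => (K ω, W₄ ω)) :=
    myEntCompLe μ hKW Prod.swap
  have hsw2 : ent μ (fun ω => (K ω, W₄ ω)) ≤ ent μ (fun ω => (W₄ ω, K ω)) :=
    myEntCompLe μ hW4K Prod.swap
  refine ⟨hent, ?_, ?_⟩
  · unfold condEnt
    rw [hent, h3]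
    ring
  · unfold condEnt
    have : ent μ (fun ω => (W₄ ω, K ω)) = c := le_antisymm (le_trans hsw1 hle) (le_trans hge hsw2)
    rw [this, h2]
    ring
end
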